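/- Let n and m be positive integers, γ ∈ ℝ, P a real n×n matrix, d ∈ ℝⁿ, and for each s ∈ {1,…,n} let φ(s) ∈ ℝᵐ; let Φ be the n×m matrix whose s-th row is φ(s)ᵀ, and D := diag(d). Then Σ_s d_s · φ(s) · (φ(s) − γ·Σ_{s'} P_{s s'} φ(s'))ᵀ − (Σ_s d_s · φ(s)) · (Σ_s d_s · (φ(s) − γ·Σ_{s'} P_{s s'} φ(s')))ᵀ = Φᵀ(D − d dᵀ)(I − γP)Φ. -/

import Mathlib

open Matrix

lemma sum_smul_vecMulVec {n m : ℕ} (c : Fin n → ℝ) (u v : Fin n → Fin m → ℝ) :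
    (∑ s, c s • vecMulVec (u s) (v s))
      = (Matrix.of u)ᵀ * diagonal c * Matrix.of v := by
  ext i j
  simp [Matrix.sum_apply, Matrix.mul_apply, vecMulVec_apply, Matrix.diagonal_apply,
    Finset.mul_sum, Finset.sum_mul, ite_mul]
  exact Finset.sum_congr rfl fun x _ => by ring

lemma vecMulVec_middle {n m : ℕ} (d : Fin n → ℝ) (A : Matrix (Fin m) (Fin n) ℝ)
    (B : Matrix (Fin n) (Fin m) ℝ) :
    A * vecMulVec d d * B = vecMulVec (A *ᵥ d) (d ᵥ* B) := by
  ext i j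
  simp [Matrix.mul_apply, vecMulVec_apply, mulVec, vecMul, dotProduct,
    Finset.sum_mul, Finset.mul_sum]
  exact Finset.sum_congr rfl fun x _ => Finset.sum_congr rfl fun y _ => by ring

/-- Closed matrix form of the VMTD key matrix:
`E[(φ - γφ')φᵀ] - E[φ - γφ']E[φᵀ] = Φᵀ(D - d dᵀ)(I - γP)Φ`. -/
theorem vmtd_key_matrix_closed_form
    (n m : ℕ) (hn : 0 < n) (hm : 0 < m) (γ : ℝ)
    (P : Matrix (Fin n) (Fin n) ℝ) (d : Fin n → ℝ)
    (φ : Fin n → Fin m → ℝ) :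
    (∑ s, d s • vecMulVec (φ s) (φ s - γ • ∑ s', P s s' • φ s'))
      - vecMulVec (∑ s, d s • φ s)
          (∑ s, d s • (φ s - γ • ∑ s', P s s' • φ s'))
    = (Matrix.of φ)ᵀ * (diagonal d - vecMulVec d d) * (1 - γ • P)
        * Matrix.of φ := by
  set Ψ : Matrix (Fin n) (Fin m) ℝ := (1 - γ • P) * Matrix.of φ with hΨ
  have hrow : ∀ s, (φ s - γ • ∑ s', P s s' • φ s') = Ψ s := by
    intro s
    funext j
    simp [hΨ, Matrix.mul_apply, Matrix.sub_apply, Matrix.one_apply, mul_sub,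
      Finset.sum_sub_distrib, Finset.sum_apply, Finset.mul_sum, mul_ite,
      Finset.sum_ite_eq, mul_comm, mul_left_comm]
  have h1 : (∑ s, d s • φ s) = (Matrix.of φ)ᵀ *ᵥ d := by
    funext i
    simp [mulVec, dotProduct, mul_comm, Finset.sum_apply]
  have h2 : (∑ s, d s • (Ψ s : Fin m → ℝ)) = d ᵥ* Ψ := by
    funext j
    simp [vecMul, dotProduct, Finset.sum_apply]
  calc (∑ s, d s • vecMulVec (φ s) (φ s - γ • ∑ s', P s s' • φ s'))
      - vecMulVec (∑ s, d s • φ s)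
          (∑ s, d s • (φ s - γ • ∑ s', P s s' • φ s'))
      = (∑ s, d s • vecMulVec (φ s) (Ψ s))
        - vecMulVec ((Matrix.of φ)ᵀ *ᵥ d) (d ᵥ* Ψ) := by
        simp only [hrow, h1, h2]
    _ = (Matrix.of φ)ᵀ * diagonal d * Ψ
        - (Matrix.of φ)ᵀ * vecMulVec d d * Ψ := by
        rw [sum_smul_vecMulVec d φ Ψ, vecMulVec_middle]
        rfl
    _ = (Matrix.of φ)ᵀ * (diagonal d - vecMulVec d d) * (1 - γ • P)
        * Matrix.of φ := by
        rw [Matrix.mul_assoc ((Matrix.of φ)ᵀ * (diagonal d - vecMulVec d d))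
          (1 - γ • P) (Matrix.of φ), ← hΨ, Matrix.mul_sub, Matrix.sub_mul]
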